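/- Let M^O = [[0, −1, 0], [1, 0, 0], [0, 0, 0]], M^L = [[√2, 0, 0], [0, 0, 0], [−√2, 0, 0]], M^R = [[−√2, 0, −√2], [0, 0, 0], [0, 0, 0]] be the 3×3 complex matrices defining the exact scar state |Φ₂⟩ of the PXP chain. Then for every n ≥ 2 and every Fibonacci-allowed cyclic word s : ZMod n → {O, L, R}, Σ_{k ∈ ZMod n} Tr(F^{s_k} · M^{s_{k+1}} ⋯ M^{s_{k+n−1}}) = 0. (Hence |Φ₂⟩ is an exact E = 0 eigenstate of the periodic PXP chain, proven directly without using its relation to |Φ₁⟩.) -/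

import Mathlib

open Matrix

/-- The blocked three-letter alphabet `{O, L, R}`. -/
inductive Blk | O | L | R
deriving DecidableEq

/-- The MPS tensors of the exact scar state `|Φ₂⟩` of the PXP chain. -/
noncomputable def MPhi2 : Blk → Matrix (Fin 3) (Fin 3) ℂ
  | .O => !![0, -1, 0; 1, 0, 0; 0, 0, 0]
  | .L => !![(Real.sqrt 2 : ℂ), 0, 0; 0, 0, 0; -(Real.sqrt 2 : ℂ), 0, 0]
  | .R => !![-(Real.sqrt 2 : ℂ), 0, -(Real.sqrt 2 : ℂ); 0, 0, 0; 0, 0, 0]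

/-- The defect matrices: `F^O = M^L + M^R`, `F^L = F^R = M^O`. -/
noncomputable def FPhi2 : Blk → Matrix (Fin 3) (Fin 3) ℂ
  | .O => MPhi2 .L + MPhi2 .R
  | .L => MPhi2 .O
  | .R => MPhi2 .O

/-- Auxiliary telescoping matrices. -/
noncomputable def BPhi2 : Blk → Matrix (Fin 3) (Fin 3) ℂ
  | .O => !![(Real.sqrt 2 : ℂ)/2, 0, 0; 0, (Real.sqrt 2 : ℂ)/2, 0;
              -(Real.sqrt 2 : ℂ), 0, 0]
  | .L => !![0, 0, 0; 1, 0, 0; 0, -1, 0]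
  | .R => !![0, 0, 0; 1, 0, 1; 0, 0, 0]

lemma sqrt2_mul_self : (Real.sqrt 2 : ℂ) * (Real.sqrt 2 : ℂ) = 2 := by
  rw [← Complex.ofReal_mul, Real.mul_self_sqrt (by norm_num)]
  norm_num

set_option maxHeartbeats 1000000 in
lemma key_telescope (s t : Blk) (h : ¬ (s = Blk.R ∧ t = Blk.L)) :
    FPhi2 s * MPhi2 t = BPhi2 s * MPhi2 t - MPhi2 s * BPhi2 t := by
  have h2 := sqrt2_mul_self
  cases s <;> cases t
  case R.L => exact absurd ⟨rfl, rfl⟩ h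
  all_goals
    (ext i j
     fin_cases i <;> fin_cases j <;>
         simp [FPhi2, MPhi2, BPhi2, Matrix.mul_apply, Fin.sum_univ_three,
           Matrix.vecHead, Matrix.vecTail, Matrix.add_apply, Matrix.sub_apply] <;>
         ring_nf <;>
         first
           | rfl
           | linear_combination h2
           | linear_combination -h2
           | linear_combination h2/2
           | linear_combination -h2/2
           | linear_combination 2*h2
           | linear_combination -2*h2)

/-- for the `|Φ₂⟩` MPS tensors, the cyclic insertion sum
vanishes on every Fibonacci-allowed cyclic word, hence `|Φ₂⟩` is an exact
`E = 0` eigenstate of the periodic PXP chain. -/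
theorem Phi2_cyclic_insertion_sum_eq_zero
    (n : ℕ) [NeZero n] (hn : 2 ≤ n)
    (s : ZMod n → Blk)
    (hfib : ¬ ∃ k : ZMod n, s k = Blk.R ∧ s (k + 1) = Blk.L) :
    ∑ k : ZMod n,
      Matrix.trace (FPhi2 (s k) *
        (List.ofFn fun j : Fin (n - 1) =>
          MPhi2 (s (k + 1 + ((j : ℕ) : ZMod n)))).prod) = 0 := by
  obtain ⟨m, rfl⟩ : ∃ m, n = m + 2 := ⟨n - 2, by omega⟩
  -- the product of all tensors except position `k`
  set P : ZMod (m + 2) → Matrix (Fin 3) (Fin 3) ℂ := fun k =>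
    (List.ofFn fun j : Fin (m + 1) =>
      MPhi2 (s (k + 1 + ((j : ℕ) : ZMod (m + 2))))).prod with hP
  -- the product of all tensors except positions `k` and `k+1`
  set Q : ZMod (m + 2) → Matrix (Fin 3) (Fin 3) ℂ := fun k =>
    (List.ofFn fun j : Fin m =>
      MPhi2 (s (k + 2 + ((j : ℕ) : ZMod (m + 2))))).prod with hQ
  have hcast : ((m + 2 : ℕ) : ZMod (m + 2)) = 0 := ZMod.natCast_self _
  have hm2 : ((m : ℕ) : ZMod (m + 2)) + 2 = 0 := by
    push_cast at hcast; linear_combination hcast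
  have hPQ1 : ∀ k, P k = MPhi2 (s (k + 1)) * Q k := by
    intro k
    simp only [hP, hQ]
    rw [List.ofFn_succ, List.prod_cons]
    have h0 : ∀ i : Fin m,
        k + 1 + (((i.succ : Fin (m + 1)) : ℕ) : ZMod (m + 2))
          = k + 2 + ((i : ℕ) : ZMod (m + 2)) := by
      intro i; push_cast [Fin.val_succ]; ring
    congr 1
    · norm_num
    · exact congrArg _ (congrArg List.ofFn (funext fun i => by rw [h0 i]))
  have hPQ2 : ∀ k, P (k + 1) = Q k * MPhi2 (s k) := by
    intro k
    simp only [hP, hQ]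
    rw [List.ofFn_succ', List.prod_concat]
    have h0 : ∀ i : Fin m,
        k + 1 + 1 + (((i.castSucc : Fin (m + 1)) : ℕ) : ZMod (m + 2))
          = k + 2 + ((i : ℕ) : ZMod (m + 2)) := by
      intro i; push_cast [Fin.coe_castSucc]; ring
    have h1 : k + 1 + 1 + (((Fin.last m : Fin (m + 1)) : ℕ) : ZMod (m + 2)) = k := by
      push_cast [Fin.val_last]; linear_combination hm2
    congr 1
    · exact congrArg _ (congrArg List.ofFn (funext fun i => by rw [h0 i]))
    · rw [h1]
  have hterm : ∀ k : ZMod (m + 2),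
      Matrix.trace (FPhi2 (s k) * P k)
        = Matrix.trace (BPhi2 (s k) * P k)
          - Matrix.trace (BPhi2 (s (k + 1)) * P (k + 1)) := by
    intro k
    have hkey := key_telescope (s k) (s (k + 1)) (fun hc => hfib ⟨k, hc⟩)
    calc Matrix.trace (FPhi2 (s k) * P k)
        = Matrix.trace ((FPhi2 (s k) * MPhi2 (s (k + 1))) * Q k) := by
          rw [hPQ1 k, Matrix.mul_assoc]
      _ = Matrix.trace ((BPhi2 (s k) * MPhi2 (s (k + 1))
            - MPhi2 (s k) * BPhi2 (s (k + 1))) * Q k) := by rw [hkey]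
      _ = Matrix.trace (BPhi2 (s k) * (MPhi2 (s (k + 1)) * Q k))
            - Matrix.trace (MPhi2 (s k) * (BPhi2 (s (k + 1)) * Q k)) := by
          rw [Matrix.sub_mul, Matrix.trace_sub, Matrix.mul_assoc, Matrix.mul_assoc]
      _ = Matrix.trace (BPhi2 (s k) * P k)
            - Matrix.trace (BPhi2 (s (k + 1)) * P (k + 1)) := by
          rw [← hPQ1 k, Matrix.trace_mul_comm (MPhi2 (s k)), Matrix.mul_assoc,
            ← hPQ2 k]
  calc ∑ k : ZMod (m + 2), Matrix.trace (FPhi2 (s k) * P k)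
      = ∑ k : ZMod (m + 2),
          (Matrix.trace (BPhi2 (s k) * P k)
            - Matrix.trace (BPhi2 (s (k + 1)) * P (k + 1))) :=
        Finset.sum_congr rfl fun k _ => hterm k
    _ = (∑ k : ZMod (m + 2), Matrix.trace (BPhi2 (s k) * P k))
          - ∑ k : ZMod (m + 2), Matrix.trace (BPhi2 (s (k + 1)) * P (k + 1)) :=
        Finset.sum_sub_distrib _ _
    _ = 0 := by
        have hre : ∑ k : ZMod (m + 2),
            Matrix.trace (BPhi2 (s (k + 1)) * P (k + 1))
              = ∑ k : ZMod (m + 2), Matrix.trace (BPhi2 (s k) * P k) :=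
          Fintype.sum_equiv (Equiv.addRight (1 : ZMod (m + 2))) _ _ (fun k => rfl)
        rw [hre, sub_self]
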